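/- arXiv:1101.5395 — 8 statements merged into one kernel-verified Lean document; each statement's English description precedes it below -/
import Mathlib

section
/- For nonnegative integers p, q and an integer z with 0 < z < p+q, there is a bijection from the disjoint union over k (with max(0, z-q) ≤ k ≤ min(p, z)) of the products Sh(k, z-k) × Sh(p-k, q+k-z) of sets of shuffles, onto the set Sh(p, q) of (p,q)-shuffles. Here a (a,b)-shuffle is a permutation γ of {0,1,...,a+b-1} such that γ is increasing on {0,...,a-1} and increasing on {a,...,a+b-1}. The bijection sends (α, β) ∈ Sh(k, z-k) × Sh(p-k, q+k-z) to the permutation γ defined by γ(c) = α(c) for c ∈ [0, k-1], γ(c) = β(c-k) + z for c ∈ [k, p-1], γ(c) = α(c-p+k) for c ∈ [p, p+z-k-1], and γ(c) = β(c-z) + z for c ∈ [p+z-k, p+q-1]. -/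
/-- A permutation `γ` of `Fin n` is an `(a, n-a)`-shuffle if it is strictly increasing
on `{0, ..., a-1}` and on `{a, ..., n-1}`. -/
def IsShuffle (a : ℕ) {n : ℕ} (γ : Equiv.Perm (Fin n)) : Prop :=
  (∀ c d : Fin n, (c : ℕ) < d → (d : ℕ) < a → γ c < γ d) ∧
  (∀ c d : Fin n, a ≤ (c : ℕ) → (c : ℕ) < (d : ℕ) → γ c < γ d)

/-- The value of a permutation of `Fin n` on a natural number (junk value `i` for `i ≥ n`). -/
def permNat {n : ℕ} (γ : Equiv.Perm (Fin n)) (i : ℕ) : ℕ :=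
  if h : i < n then (γ ⟨i, h⟩ : ℕ) else i


namespace ShuffleAux

lemma permNat_lt {n : ℕ} (γ : Equiv.Perm (Fin n)) {i : ℕ} (h : i < n) : permNat γ i < n := by
  simp only [permNat, dif_pos h]; exact (γ ⟨i, h⟩).2

lemma permNat_inj {n : ℕ} (γ : Equiv.Perm (Fin n)) {i j : ℕ} (hi : i < n) (hj : j < n)
    (h : permNat γ i = permNat γ j) : i = j := by
  simp only [permNat, dif_pos hi, dif_pos hj] at h
  have := γ.injective (Fin.val_injective h)
  exact congrArg Fin.val this

lemma permNat_val {n : ℕ} (γ : Equiv.Perm (Fin n)) (c : Fin n) :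
    permNat γ (c : ℕ) = (γ c : ℕ) := by
  simp [permNat]

lemma shuffle_lt₁ {a n : ℕ} {γ : Equiv.Perm (Fin n)} (h : IsShuffle a γ) {c d : ℕ}
    (hcd : c < d) (hda : d < a) (hdn : d < n) : permNat γ c < permNat γ d := by
  have hcn : c < n := hcd.trans hdn
  simp only [permNat, dif_pos hcn, dif_pos hdn]
  exact h.1 ⟨c, hcn⟩ ⟨d, hdn⟩ hcd hda

lemma shuffle_lt₂ {a n : ℕ} {γ : Equiv.Perm (Fin n)} (h : IsShuffle a γ) {c d : ℕ}
    (hac : a ≤ c) (hcd : c < d) (hdn : d < n) : permNat γ c < permNat γ d := by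
  have hcn : c < n := hcd.trans hdn
  simp only [permNat, dif_pos hcn, dif_pos hdn]
  exact h.2 ⟨c, hcn⟩ ⟨d, hdn⟩ hac hcd

noncomputable def mkPerm (n : ℕ) (f : ℕ → ℕ) (h1 : ∀ i, i < n → f i < n)
    (h2 : ∀ i, i < n → ∀ j, j < n → f i = f j → i = j) : Equiv.Perm (Fin n) :=
  Equiv.ofBijective (fun c => ⟨f c.1, h1 c.1 c.2⟩)
    (Finite.injective_iff_bijective.mp (fun a b hab =>
      Fin.ext (h2 a.1 a.2 b.1 b.2 (congrArg Fin.val hab))))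

lemma permNat_mkPerm (n : ℕ) (f : ℕ → ℕ) (h1 : ∀ i, i < n → f i < n)
    (h2 : ∀ i, i < n → ∀ j, j < n → f i = f j → i = j) {i : ℕ} (h : i < n) :
    permNat (mkPerm n f h1 h2) i = f i := by
  simp only [permNat, dif_pos h, mkPerm, Equiv.ofBijective_apply]

lemma isShuffle_mkPerm {n a : ℕ} {f : ℕ → ℕ} {h1 : ∀ i, i < n → f i < n}
    {h2 : ∀ i, i < n → ∀ j, j < n → f i = f j → i = j}
    (H1 : ∀ c d, c < d → d < a → d < n → f c < f d)
    (H2 : ∀ c d, a ≤ c → c < d → d < n → f c < f d) :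
    IsShuffle a (mkPerm n f h1 h2) := by
  constructor
  · intro c d hcd hda
    have : f c.1 < f d.1 := H1 c.1 d.1 hcd hda d.2
    simpa [mkPerm, Fin.lt_def] using this
  · intro c d hac hcd
    have : f c.1 < f d.1 := H2 c.1 d.1 hac hcd d.2
    simpa [mkPerm, Fin.lt_def] using this

lemma perm_ext {n : ℕ} {γ γ' : Equiv.Perm (Fin n)}
    (h : ∀ i, i < n → permNat γ i = permNat γ' i) : γ = γ' := by
  apply Equiv.ext; intro i; apply Fin.ext
  have := h i.1 i.2
  simpa [permNat] using this

lemma filter_lt_card {n : ℕ} {z : ℕ} (hz : z ≤ n) :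
    (Finset.univ.filter (fun v : Fin n => (v : ℕ) < z)).card = z := by
  rw [show Finset.univ.filter (fun v : Fin n => (v : ℕ) < z)
      = (Finset.range z).attachFin
        (fun m hm => lt_of_lt_of_le (Finset.mem_range.mp hm) hz) from ?_]
  · rw [Finset.card_attachFin, Finset.card_range]
  · ext v; simp [Finset.mem_attachFin]

lemma filter_Ico_card {n : ℕ} (a b : ℕ) (hb : b ≤ n) :
    (Finset.univ.filter (fun v : Fin n => a ≤ (v : ℕ) ∧ (v : ℕ) < b)).card = b - a := by
  rw [show Finset.univ.filter (fun v : Fin n => a ≤ (v : ℕ) ∧ (v : ℕ) < b)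
      = (Finset.Ico a b).attachFin
        (fun m hm => lt_of_lt_of_le (Finset.mem_Ico.mp hm).2 hb) from ?_]
  · rw [Finset.card_attachFin, Nat.card_Ico]
  · ext v; simp [Finset.mem_attachFin, Finset.mem_Ico]

lemma count_lt {n z : ℕ} (hz : z ≤ n) (γ : Equiv.Perm (Fin n)) :
    (Finset.univ.filter (fun c : Fin n => (γ c : ℕ) < z)).card = z := by
  have h : Finset.univ.filter (fun c : Fin n => (γ c : ℕ) < z)
      = (Finset.univ.filter (fun v : Fin n => (v : ℕ) < z)).map γ.symm.toEmbedding := by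
    ext c
    simp only [Finset.mem_filter, Finset.mem_map, Finset.mem_univ, true_and,
      Equiv.coe_toEmbedding]
    constructor
    · intro hc; exact ⟨γ c, hc, γ.symm_apply_apply c⟩
    · rintro ⟨v, hv, rfl⟩; rwa [γ.apply_symm_apply]
  rw [h, Finset.card_map, filter_lt_card hz]

end ShuffleAux

namespace ShuffleAux

def fwd (p q z k : ℕ) (α : Equiv.Perm (Fin z)) (β : Equiv.Perm (Fin (p + q - z)))
    (c : ℕ) : ℕ :=
  if c < k then permNat α c
  else if c < p then permNat β (c - k) + z
  else if c < p + z - k then permNat α (c - p + k)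
  else permNat β (c - z) + z

variable {p q z k : ℕ} (α : Equiv.Perm (Fin z)) (β : Equiv.Perm (Fin (p + q - z)))

lemma fwd_lt (hk1 : z - q ≤ k) (hk2 : k ≤ min p z) (hzpq : z < p + q) :
    ∀ i, i < p + q → fwd p q z k α β i < p + q := by
  intro i hi
  unfold fwd
  split_ifs with h1 h2 h3
  · have := permNat_lt α (show i < z by omega); omega
  · have := permNat_lt β (show i - k < p + q - z by omega); omega
  · have := permNat_lt α (show i - p + k < z by omega); omega
  · have := permNat_lt β (show i - z < p + q - z by omega); omega

lemma fwd_inj (hk1 : z - q ≤ k) (hk2 : k ≤ min p z) (hzpq : z < p + q) :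
    ∀ i, i < p + q → ∀ j, j < p + q → fwd p q z k α β i = fwd p q z k α β j → i = j := by
  intro i hi j hj h
  unfold fwd at h
  split_ifs at h with hi1 hj1 hj2 hj3 hi2 hj1 hj2 hj3 hi3 hj1 hj2 hj3 hj1 hj2 hj3
  -- i region 1
  · exact permNat_inj α (by omega) (by omega) h
  · have := permNat_lt α (show i < z by omega); omega
  · have := permNat_inj α (show i < z by omega) (show j - p + k < z by omega) h; omega
  · have := permNat_lt α (show i < z by omega); omega
  -- i region 2
  · have := permNat_lt α (show j < z by omega); omega
  · have := permNat_inj β (show i - k < p + q - z by omega)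
      (show j - k < p + q - z by omega) (by omega); omega
  · have := permNat_lt α (show j - p + k < z by omega); omega
  · have := permNat_inj β (show i - k < p + q - z by omega)
      (show j - z < p + q - z by omega) (by omega); omega
  -- i region 3
  · have := permNat_inj α (show i - p + k < z by omega) (show j < z by omega) h; omega
  · have := permNat_lt α (show i - p + k < z by omega); omega
  · have := permNat_inj α (show i - p + k < z by omega) (show j - p + k < z by omega) h; omega
  · have := permNat_lt α (show i - p + k < z by omega); omega
  -- i region 4
  · have := permNat_lt α (show j < z by omega); omega
  · have := permNat_inj β (show i - z < p + q - z by omega)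
      (show j - k < p + q - z by omega) (by omega); omega
  · have := permNat_lt α (show j - p + k < z by omega); omega
  · have := permNat_inj β (show i - z < p + q - z by omega)
      (show j - z < p + q - z by omega) (by omega); omega

lemma fwd_mono₁ (hk1 : z - q ≤ k) (hk2 : k ≤ min p z) (hzpq : z < p + q)
    (hα : IsShuffle k α) (hβ : IsShuffle (p - k) β) :
    ∀ c d, c < d → d < p → d < p + q → fwd p q z k α β c < fwd p q z k α β d := by
  intro c d hcd hdp hdn
  unfold fwd
  have hcp : c < p := hcd.trans hdp
  by_cases hc1 : c < k
  · rw [if_pos hc1]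
    by_cases hd1 : d < k
    · rw [if_pos hd1]
      exact shuffle_lt₁ hα hcd hd1 (by omega)
    · rw [if_neg hd1, if_pos hdp]
      have := permNat_lt α (show c < z by omega); omega
  · rw [if_neg hc1, if_pos hcp]
    have hd1 : ¬ d < k := by omega
    rw [if_neg hd1, if_pos hdp]
    have := shuffle_lt₁ hβ (show c - k < d - k by omega) (by omega) (by omega); omega

lemma fwd_mono₂ (hk1 : z - q ≤ k) (hk2 : k ≤ min p z) (hzpq : z < p + q)
    (hα : IsShuffle k α) (hβ : IsShuffle (p - k) β) :
    ∀ c d, p ≤ c → c < d → d < p + q → fwd p q z k α β c < fwd p q z k α β d := by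
  intro c d hpc hcd hdn
  unfold fwd
  have hc1 : ¬ c < k := by omega
  have hc2 : ¬ c < p := by omega
  have hd1 : ¬ d < k := by omega
  have hd2 : ¬ d < p := by omega
  rw [if_neg hc1, if_neg hc2, if_neg hd1, if_neg hd2]
  split_ifs with hc3 hd3 hd3
  · exact shuffle_lt₂ hα (show k ≤ c - p + k by omega) (by omega) (by omega)
  · have := permNat_lt α (show c - p + k < z by omega); omega
  · omega
  · have := shuffle_lt₂ hβ (show p - k ≤ c - z by omega) (show c - z < d - z by omega)
      (by omega); omega

end ShuffleAux

namespace ShuffleAux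

noncomputable def Fmap (p q z : ℕ) (hzpq : z < p + q) :
    (Σ _k : {k : ℕ // z - q ≤ k ∧ k ≤ min p z},
        {α : Equiv.Perm (Fin z) // IsShuffle _k.1 α} ×
        {β : Equiv.Perm (Fin (p + q - z)) // IsShuffle (p - _k.1) β}) →
      {γ : Equiv.Perm (Fin (p + q)) // IsShuffle p γ} := fun x =>
  ⟨mkPerm (p + q) (fwd p q z x.1.1 x.2.1.1 x.2.2.1)
      (fwd_lt x.2.1.1 x.2.2.1 x.1.2.1 x.1.2.2 hzpq)
      (fwd_inj x.2.1.1 x.2.2.1 x.1.2.1 x.1.2.2 hzpq),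
    isShuffle_mkPerm
      (fwd_mono₁ x.2.1.1 x.2.2.1 x.1.2.1 x.1.2.2 hzpq x.2.1.2 x.2.2.2)
      (fwd_mono₂ x.2.1.1 x.2.2.1 x.1.2.1 x.1.2.2 hzpq x.2.1.2 x.2.2.2)⟩

lemma permNat_Fmap (p q z : ℕ) (hzpq : z < p + q) (x) {c : ℕ} (hc : c < p + q) :
    permNat (Fmap p q z hzpq x).1 c = fwd p q z x.1.1 x.2.1.1 x.2.2.1 c := by
  exact permNat_mkPerm (p + q) (fwd p q z x.1.1 x.2.1.1 x.2.2.1)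
    (fwd_lt x.2.1.1 x.2.2.1 x.1.2.1 x.1.2.2 hzpq)
    (fwd_inj x.2.1.1 x.2.2.1 x.1.2.1 x.1.2.2 hzpq) hc

lemma Fmap_inj (p q z : ℕ) (hz : 0 < z) (hzpq : z < p + q) :
    Function.Injective (Fmap p q z hzpq) := by
  rintro ⟨⟨k, hk⟩, ⟨α, hα⟩, ⟨β, hβ⟩⟩ ⟨⟨k', hk'⟩, ⟨α', hα'⟩, ⟨β', hβ'⟩⟩ hFeq
  have hval : ∀ i, i < p + q → fwd p q z k α β i = fwd p q z k' α' β' i := by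
    intro i hi
    have h2 := congrArg (fun g => permNat g.1 i) hFeq
    simpa only [permNat_Fmap p q z hzpq _ hi] using h2
  obtain ⟨hk1, hk2⟩ := hk
  obtain ⟨hk1', hk2'⟩ := hk'
  have hkk : k = k' := by
    rcases Nat.lt_trichotomy k k' with h | h | h
    · exfalso
      have hv := hval k (by omega)
      have e1 : ¬ k < k := by omega
      have e2 : k < p := by omega
      simp only [fwd, if_neg e1, if_pos e2, if_pos h] at hv
      have := permNat_lt α' (show k < z by omega)
      omega
    · exact h
    · exfalso
      have hv := hval k' (by omega)
      have e1 : ¬ k' < k' := by omega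
      have e2 : k' < p := by omega
      simp only [fwd, if_neg e1, if_pos e2, if_pos h] at hv
      have := permNat_lt α (show k' < z by omega)
      omega
  subst hkk
  have hαα : α = α' := by
    apply perm_ext; intro i hi
    rcases Nat.lt_or_ge i k with h | h
    · have hv := hval i (by omega)
      simpa only [fwd, if_pos h] using hv
    · have hv := hval (i + p - k) (by omega)
      have e1 : ¬ (i + p - k < k) := by omega
      have e2 : ¬ (i + p - k < p) := by omega
      have e3 : i + p - k < p + z - k := by omega
      have e4 : i + p - k - p + k = i := by omega
      simpa only [fwd, if_neg e1, if_neg e2, if_pos e3, e4] using hv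
  have hββ : β = β' := by
    apply perm_ext; intro i hi
    rcases Nat.lt_or_ge i (p - k) with h | h
    · have hv := hval (i + k) (by omega)
      have e1 : ¬ (i + k < k) := by omega
      have e2 : i + k < p := by omega
      have e4 : i + k - k = i := by omega
      simp only [fwd, if_neg e1, if_pos e2, e4] at hv
      omega
    · have hv := hval (i + z) (by omega)
      have e1 : ¬ (i + z < k) := by omega
      have e2 : ¬ (i + z < p) := by omega
      have e3 : ¬ (i + z < p + z - k) := by omega
      have e4 : i + z - z = i := by omega
      simp only [fwd, if_neg e1, if_neg e2, if_neg e3, e4] at hv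
      omega
  subst hαα; subst hββ
  rfl

end ShuffleAux

namespace ShuffleAux

lemma Fmap_surj (p q z : ℕ) (hz : 0 < z) (hzpq : z < p + q) :
    Function.Surjective (Fmap p q z hzpq) := by
  rintro ⟨γ, hγ⟩
  have hPex : ∃ c, p ≤ c ∨ z ≤ permNat γ c := ⟨p, Or.inl le_rfl⟩
  have hQex : ∃ c, p + q ≤ p + c ∨ z ≤ permNat γ (p + c) := ⟨q, Or.inl le_rfl⟩
  set k := Nat.find hPex with hkdef
  set j := Nat.find hQex with hjdef
  have hkp : k ≤ p := Nat.find_min' hPex (Or.inl le_rfl)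
  have hjq : j ≤ q := Nat.find_min' hQex (Or.inl le_rfl)
  have hlow : ∀ c, c < k → c < p ∧ permNat γ c < z := by
    intro c hc
    have h := Nat.find_min hPex hc
    push_neg at h
    exact ⟨by omega, by omega⟩
  have hhigh : ∀ c, k ≤ c → c < p → z ≤ permNat γ c := by
    intro c hc1 hc2
    have hspec := Nat.find_spec hPex
    rw [← hkdef] at hspec
    have hkz : z ≤ permNat γ k := by
      rcases hspec with h | h
      · omega
      · exact h
    rcases Nat.eq_or_lt_of_le hc1 with h | h
    · rw [← h]; exact hkz
    · exact le_of_lt (lt_of_le_of_lt hkz (shuffle_lt₁ hγ h hc2 (by omega)))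
  have hlow2 : ∀ c, p ≤ c → c < p + j → permNat γ c < z := by
    intro c hc1 hc2
    have h := Nat.find_min hQex (show c - p < j by omega)
    push_neg at h
    rw [show p + (c - p) = c by omega] at h
    exact h.2
  have hhigh2 : ∀ c, p + j ≤ c → c < p + q → z ≤ permNat γ c := by
    intro c hc1 hc2
    have hspec := Nat.find_spec hQex
    rw [← hjdef] at hspec
    have hjz : z ≤ permNat γ (p + j) := by
      rcases hspec with h | h
      · omega
      · exact h
    rcases Nat.eq_or_lt_of_le hc1 with h | h
    · rw [← h]; exact hjz
    · exact le_of_lt (lt_of_le_of_lt hjz (shuffle_lt₂ hγ (by omega) h hc2))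
  -- counting : k + j = z
  have hchar : ∀ c : Fin (p + q),
      ((γ c : ℕ) < z ↔ ((c : ℕ) < k ∨ (p ≤ (c : ℕ) ∧ (c : ℕ) < p + j))) := by
    intro c
    have hcn := c.2
    rw [← permNat_val γ c]
    constructor
    · intro h
      by_contra hcon
      push_neg at hcon
      rcases Nat.lt_or_ge (c : ℕ) p with hcp | hcp
      · have := hhigh c (by omega) hcp; omega
      · have := hhigh2 c (by omega) hcn; omega
    · intro h
      rcases h with h | h
      · exact (hlow c h).2
      · exact hlow2 c h.1 h.2
  have hcard1 := count_lt (show z ≤ p + q by omega) γ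
  have hsplit : Finset.univ.filter (fun c : Fin (p + q) => (γ c : ℕ) < z)
      = Finset.univ.filter (fun c : Fin (p + q) => (c : ℕ) < k)
        ∪ Finset.univ.filter (fun c : Fin (p + q) => p ≤ (c : ℕ) ∧ (c : ℕ) < p + j) := by
    rw [← Finset.filter_or]
    exact Finset.filter_congr (fun c _ => by rw [hchar c])
  have hdisj : Disjoint (Finset.univ.filter (fun c : Fin (p + q) => (c : ℕ) < k))
      (Finset.univ.filter (fun c : Fin (p + q) => p ≤ (c : ℕ) ∧ (c : ℕ) < p + j)) := by
    rw [Finset.disjoint_left]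
    intro a ha hb
    simp only [Finset.mem_filter] at ha hb
    omega
  have hkj : k + j = z := by
    rw [hsplit, Finset.card_union_of_disjoint hdisj,
      filter_lt_card (show k ≤ p + q by omega),
      filter_Ico_card p (p + j) (by omega)] at hcard1
    omega
  -- the two small shuffles
  have haF1 : ∀ i, i < z → (if i < k then permNat γ i else permNat γ (i - k + p)) < z := by
    intro i hi
    split_ifs with h
    · exact (hlow i h).2
    · exact hlow2 (i - k + p) (by omega) (by omega)
  have haF2 : ∀ i, i < z → ∀ i', i' < z →
      (if i < k then permNat γ i else permNat γ (i - k + p))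
        = (if i' < k then permNat γ i' else permNat γ (i' - k + p)) → i = i' := by
    intro i hi i' hi' h
    split_ifs at h with h1 h2 h2
    · exact permNat_inj γ (by omega) (by omega) h
    · have := permNat_inj γ (show i < p + q by omega) (show i' - k + p < p + q by omega) h
      omega
    · have := permNat_inj γ (show i - k + p < p + q by omega) (show i' < p + q by omega) h
      omega
    · have := permNat_inj γ (show i - k + p < p + q by omega)
        (show i' - k + p < p + q by omega) h
      omega
  have hbF1 : ∀ i, i < p + q - z →
      (if i < p - k then permNat γ (i + k) - z else permNat γ (i + z) - z) < p + q - z := by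
    intro i hi
    split_ifs with h
    · have := hhigh (i + k) (by omega) (by omega)
      have := permNat_lt γ (show i + k < p + q by omega)
      omega
    · have := hhigh2 (i + z) (by omega) (by omega)
      have := permNat_lt γ (show i + z < p + q by omega)
      omega
  have hbF2 : ∀ i, i < p + q - z → ∀ i', i' < p + q - z →
      (if i < p - k then permNat γ (i + k) - z else permNat γ (i + z) - z)
        = (if i' < p - k then permNat γ (i' + k) - z else permNat γ (i' + z) - z) →
      i = i' := by
    intro i hi i' hi' h
    split_ifs at h with h1 h2 h2
    · have e1 := hhigh (i + k) (by omega) (by omega)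
      have e2 := hhigh (i' + k) (by omega) (by omega)
      have := permNat_inj γ (show i + k < p + q by omega) (show i' + k < p + q by omega)
        (by omega)
      omega
    · have e1 := hhigh (i + k) (by omega) (by omega)
      have e2 := hhigh2 (i' + z) (by omega) (by omega)
      have := permNat_inj γ (show i + k < p + q by omega) (show i' + z < p + q by omega)
        (by omega)
      omega
    · have e1 := hhigh2 (i + z) (by omega) (by omega)
      have e2 := hhigh (i' + k) (by omega) (by omega)
      have := permNat_inj γ (show i + z < p + q by omega) (show i' + k < p + q by omega)
        (by omega)
      omega
    · have e1 := hhigh2 (i + z) (by omega) (by omega)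
      have e2 := hhigh2 (i' + z) (by omega) (by omega)
      have := permNat_inj γ (show i + z < p + q by omega) (show i' + z < p + q by omega)
        (by omega)
      omega
  have hfin : ∀ i, i < p + q →
      fwd p q z k (mkPerm z (fun c => if c < k then permNat γ c else permNat γ (c - k + p))
          haF1 haF2)
        (mkPerm (p + q - z)
          (fun c => if c < p - k then permNat γ (c + k) - z else permNat γ (c + z) - z)
          hbF1 hbF2) i = permNat γ i := by
    intro i hi
    unfold fwd
    rcases Nat.lt_or_ge i k with h1 | h1
    · rw [if_pos h1, permNat_mkPerm _ _ haF1 haF2 (show i < z by omega)]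
      rw [if_pos h1]
    · rw [if_neg (show ¬ i < k by omega)]
      rcases Nat.lt_or_ge i p with h2 | h2
      · rw [if_pos h2, permNat_mkPerm _ _ hbF1 hbF2 (show i - k < p + q - z by omega)]
        rw [if_pos (show i - k < p - k by omega)]
        have := hhigh i h1 h2
        rw [show i - k + k = i by omega]
        omega
      · rw [if_neg (show ¬ i < p by omega)]
        rcases Nat.lt_or_ge i (p + z - k) with h3 | h3
        · rw [if_pos h3, permNat_mkPerm _ _ haF1 haF2 (show i - p + k < z by omega)]
          rw [if_neg (show ¬ i - p + k < k by omega)]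
          rw [show i - p + k - k + p = i by omega]
        · rw [if_neg (show ¬ i < p + z - k by omega),
            permNat_mkPerm _ _ hbF1 hbF2 (show i - z < p + q - z by omega)]
          rw [if_neg (show ¬ i - z < p - k by omega)]
          have := hhigh2 i (by omega) (by omega)
          rw [show i - z + z = i by omega]
          omega
  refine ⟨⟨⟨k, by omega⟩,
    ⟨mkPerm z (fun c => if c < k then permNat γ c else permNat γ (c - k + p)) haF1 haF2, ?_⟩,
    ⟨mkPerm (p + q - z)
        (fun c => if c < p - k then permNat γ (c + k) - z else permNat γ (c + z) - z)
        hbF1 hbF2, ?_⟩⟩, ?_⟩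
  · show IsShuffle k (mkPerm z
        (fun c => if c < k then permNat γ c else permNat γ (c - k + p)) haF1 haF2)
    apply isShuffle_mkPerm
    · intro c d hcd hdk hdz
      rw [if_pos (show c < k by omega), if_pos hdk]
      exact shuffle_lt₁ hγ hcd (by omega) (by omega)
    · intro c d hkc hcd hdz
      rw [if_neg (show ¬ c < k by omega), if_neg (show ¬ d < k by omega)]
      exact shuffle_lt₂ hγ (show p ≤ c - k + p by omega) (by omega) (by omega)
  · show IsShuffle (p - k) (mkPerm (p + q - z)
        (fun c => if c < p - k then permNat γ (c + k) - z else permNat γ (c + z) - z)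
        hbF1 hbF2)
    apply isShuffle_mkPerm
    · intro c d hcd hdk hdm
      rw [if_pos (show c < p - k by omega), if_pos hdk]
      have e1 := hhigh (c + k) (by omega) (by omega)
      have e2 := shuffle_lt₁ hγ (show c + k < d + k by omega) (show d + k < p by omega)
        (by omega)
      omega
    · intro c d hkc hcd hdm
      rw [if_neg (show ¬ c < p - k by omega), if_neg (show ¬ d < p - k by omega)]
      have e1 := hhigh2 (c + z) (by omega) (by omega)
      have e2 := shuffle_lt₂ hγ (show p ≤ c + z by omega) (show c + z < d + z by omega)
        (by omega)
      omega
  · apply Subtype.ext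
    apply perm_ext
    intro i hi
    rw [permNat_Fmap p q z hzpq _ hi]
    exact hfin i hi

end ShuffleAux

/-- **Shuffle splitting.** For `0 < z < p + q`, there is a bijection from the disjoint union
over `k` with `max (0, z - q) ≤ k ≤ min p z` of `Sh(k, z-k) × Sh(p-k, q+k-z)` onto `Sh(p,q)`,
given by the explicit interleaving formula. -/
theorem shuffle_splitting (p q z : ℕ) (hz : 0 < z) (hzpq : z < p + q) :
    ∃ e : (Σ _k : {k : ℕ // z - q ≤ k ∧ k ≤ min p z},
        {α : Equiv.Perm (Fin z) // IsShuffle _k.1 α} ×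
        {β : Equiv.Perm (Fin (p + q - z)) // IsShuffle (p - _k.1) β}) ≃
        {γ : Equiv.Perm (Fin (p + q)) // IsShuffle p γ},
      ∀ (x : Σ _k : {k : ℕ // z - q ≤ k ∧ k ≤ min p z},
        {α : Equiv.Perm (Fin z) // IsShuffle _k.1 α} ×
        {β : Equiv.Perm (Fin (p + q - z)) // IsShuffle (p - _k.1) β}) (c : ℕ), c < p + q →
        permNat (e x).1 c =
          if c < x.1.1 then permNat x.2.1.1 c
          else if c < p then permNat x.2.2.1 (c - x.1.1) + z
          else if c < p + z - x.1.1 then permNat x.2.1.1 (c - p + x.1.1)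
          else permNat x.2.2.1 (c - z) + z := by
  refine ⟨Equiv.ofBijective (ShuffleAux.Fmap p q z hzpq)
    ⟨ShuffleAux.Fmap_inj p q z hz hzpq, ShuffleAux.Fmap_surj p q z hz hzpq⟩, ?_⟩
  intro x c hc
  show permNat (ShuffleAux.Fmap p q z hzpq x).1 c = _
  rw [ShuffleAux.permNat_Fmap p q z hzpq x hc]
  rfl
end

section
/- Fix nonnegative integers k, p and r with r ≤ p. The map μ ↦ α, where α(t) = μ(t) - r for t ∈ [0, k-1] and α(t) = μ(t+r) - r for t ∈ [k, k+p-r-1], is a bijection from the set of (k,p)-shuffles μ satisfying r ≤ μ(0) onto the set Sh(k, p-r) of (k, p-r)-shuffles; its inverse sends α to the permutation μ with μ(t) = α(t)+r for t ∈ [0,k-1], μ(t) = t-k for t ∈ [k, k+r-1], and μ(t) = α(t-r)+r for t ∈ [k+r, k+p-1]. -/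
namespace ShuffleRestrictionAux

variable {k p r : ℕ}

/-- Lift an index of `Fin (k+p-r)` into `Fin (k+p)`, jumping over the block `[k, k+r)`. -/
def liftF (hrp : r ≤ p) (t : Fin (k + p - r)) : Fin (k + p) :=
  if (t : ℕ) < k then ⟨(t : ℕ), by have := t.2; omega⟩
  else ⟨(t : ℕ) + r, by have := t.2; omega⟩

lemma liftF_val (hrp : r ≤ p) (t : Fin (k + p - r)) :
    ((liftF hrp t : Fin (k + p)) : ℕ) = if (t : ℕ) < k then (t : ℕ) else (t : ℕ) + r := by
  unfold liftF; split <;> rfl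

lemma liftF_cond (hrp : r ≤ p) (t : Fin (k + p - r)) :
    ((liftF hrp t : Fin (k + p)) : ℕ) < k ∨ k + r ≤ ((liftF hrp t : Fin (k + p)) : ℕ) := by
  rw [liftF_val]
  split_ifs with h
  · exact Or.inl h
  · exact Or.inr (by omega)

lemma liftF_injective (hrp : r ≤ p) : Function.Injective (liftF (k := k) hrp) := by
  intro t1 t2 h
  have h' : ((liftF hrp t1 : Fin (k + p)) : ℕ) = ((liftF hrp t2 : Fin (k + p)) : ℕ) := by
    rw [h]
  rw [liftF_val, liftF_val] at h'
  apply Fin.ext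
  split_ifs at h' <;> omega

/-- The forward map on indices: `t ↦ μ(liftF t) - r`. -/
def fwdFun (hrp : r ≤ p) (μ : Equiv.Perm (Fin (k + p)))
    (hge : ∀ t : Fin (k + p), ((t : ℕ) < k ∨ k + r ≤ (t : ℕ)) → r ≤ (μ t : ℕ)) :
    Fin (k + p - r) → Fin (k + p - r) := fun t =>
  ⟨(μ (liftF hrp t) : ℕ) - r, by
    have h1 := (μ (liftF hrp t)).2
    have h2 := hge (liftF hrp t) (liftF_cond hrp t)
    omega⟩

lemma fwdFun_val (hrp : r ≤ p) (μ : Equiv.Perm (Fin (k + p)))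
    (hge : ∀ t : Fin (k + p), ((t : ℕ) < k ∨ k + r ≤ (t : ℕ)) → r ≤ (μ t : ℕ))
    (t : Fin (k + p - r)) :
    ((fwdFun hrp μ hge t : Fin (k + p - r)) : ℕ) = (μ (liftF hrp t) : ℕ) - r := rfl

lemma fwdFun_injective (hrp : r ≤ p) (μ : Equiv.Perm (Fin (k + p)))
    (hge : ∀ t : Fin (k + p), ((t : ℕ) < k ∨ k + r ≤ (t : ℕ)) → r ≤ (μ t : ℕ)) :
    Function.Injective (fwdFun hrp μ hge) := by
  intro t1 t2 h
  have h' : (μ (liftF hrp t1) : ℕ) - r = (μ (liftF hrp t2) : ℕ) - r := by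
    have := congrArg (Fin.val) h
    simpa [fwdFun_val] using this
  have h1 := hge (liftF hrp t1) (liftF_cond hrp t1)
  have h2 := hge (liftF hrp t2) (liftF_cond hrp t2)
  have : μ (liftF hrp t1) = μ (liftF hrp t2) := Fin.ext (by omega)
  exact liftF_injective hrp (μ.injective this)

/-- The forward permutation. -/
noncomputable def fwdPerm (hrp : r ≤ p) (μ : Equiv.Perm (Fin (k + p)))
    (hge : ∀ t : Fin (k + p), ((t : ℕ) < k ∨ k + r ≤ (t : ℕ)) → r ≤ (μ t : ℕ)) :
    Equiv.Perm (Fin (k + p - r)) :=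
  Equiv.ofBijective (fwdFun hrp μ hge) (Finite.injective_iff_bijective.mp
    (fwdFun_injective hrp μ hge))

lemma fwdPerm_apply (hrp : r ≤ p) (μ : Equiv.Perm (Fin (k + p)))
    (hge : ∀ t : Fin (k + p), ((t : ℕ) < k ∨ k + r ≤ (t : ℕ)) → r ≤ (μ t : ℕ))
    (t : Fin (k + p - r)) :
    fwdPerm hrp μ hge t = fwdFun hrp μ hge t := rfl

/-- The backward map on indices. -/
def bwdFun (hrp : r ≤ p) (α : Equiv.Perm (Fin (k + p - r))) :
    Fin (k + p) → Fin (k + p) := fun t =>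
  if h1 : (t : ℕ) < k then
    ⟨(α ⟨(t : ℕ), by omega⟩ : ℕ) + r, by have := (α ⟨(t : ℕ), by omega⟩).2; omega⟩
  else if h2 : (t : ℕ) < k + r then
    ⟨(t : ℕ) - k, by have := t.2; omega⟩
  else
    ⟨(α ⟨(t : ℕ) - r, by have := t.2; omega⟩ : ℕ) + r, by
      have := (α ⟨(t : ℕ) - r, by have := t.2; omega⟩).2; omega⟩

lemma bwdFun_val₁ (hrp : r ≤ p) (α : Equiv.Perm (Fin (k + p - r))) (t : Fin (k + p))
    (h : (t : ℕ) < k) :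
    ((bwdFun hrp α t : Fin (k + p)) : ℕ) = (α ⟨(t : ℕ), by omega⟩ : ℕ) + r := by
  unfold bwdFun; rw [dif_pos h]

lemma bwdFun_val₂ (hrp : r ≤ p) (α : Equiv.Perm (Fin (k + p - r))) (t : Fin (k + p))
    (h1 : ¬ (t : ℕ) < k) (h2 : (t : ℕ) < k + r) :
    ((bwdFun hrp α t : Fin (k + p)) : ℕ) = (t : ℕ) - k := by
  unfold bwdFun; rw [dif_neg h1, dif_pos h2]

lemma bwdFun_val₃ (hrp : r ≤ p) (α : Equiv.Perm (Fin (k + p - r))) (t : Fin (k + p))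
    (h1 : ¬ (t : ℕ) < k) (h2 : ¬ (t : ℕ) < k + r) :
    ((bwdFun hrp α t : Fin (k + p)) : ℕ) = (α ⟨(t : ℕ) - r, by have := t.2; omega⟩ : ℕ) + r := by
  unfold bwdFun; rw [dif_neg h1, dif_neg h2]

lemma bwdFun_injective (hrp : r ≤ p) (α : Equiv.Perm (Fin (k + p - r))) :
    Function.Injective (bwdFun hrp α) := by
  intro t1 t2 h
  have h' : ((bwdFun hrp α t1 : Fin (k + p)) : ℕ) = ((bwdFun hrp α t2 : Fin (k + p)) : ℕ) := by
    rw [h]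
  apply Fin.ext
  by_cases h11 : (t1 : ℕ) < k <;> by_cases h21 : (t2 : ℕ) < k
  · rw [bwdFun_val₁ hrp α t1 h11, bwdFun_val₁ hrp α t2 h21] at h'
    have : (α ⟨(t1 : ℕ), by omega⟩) = (α ⟨(t2 : ℕ), by omega⟩) := Fin.ext (by omega)
    have := α.injective this
    simpa using congrArg Fin.val this
  · by_cases h22 : (t2 : ℕ) < k + r
    · rw [bwdFun_val₁ hrp α t1 h11, bwdFun_val₂ hrp α t2 h21 h22] at h'
      omega
    · rw [bwdFun_val₁ hrp α t1 h11, bwdFun_val₃ hrp α t2 h21 h22] at h'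
      have : (α ⟨(t1 : ℕ), by omega⟩) = (α ⟨(t2 : ℕ) - r, by have := t2.2; omega⟩) :=
        Fin.ext (by omega)
      have := congrArg Fin.val (α.injective this)
      simp at this
      omega
  · by_cases h12 : (t1 : ℕ) < k + r
    · rw [bwdFun_val₂ hrp α t1 h11 h12, bwdFun_val₁ hrp α t2 h21] at h'
      omega
    · rw [bwdFun_val₃ hrp α t1 h11 h12, bwdFun_val₁ hrp α t2 h21] at h'
      have : (α ⟨(t1 : ℕ) - r, by have := t1.2; omega⟩) = (α ⟨(t2 : ℕ), by omega⟩) :=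
        Fin.ext (by omega)
      have := congrArg Fin.val (α.injective this)
      simp at this
      omega
  · by_cases h12 : (t1 : ℕ) < k + r <;> by_cases h22 : (t2 : ℕ) < k + r
    · rw [bwdFun_val₂ hrp α t1 h11 h12, bwdFun_val₂ hrp α t2 h21 h22] at h'
      omega
    · rw [bwdFun_val₂ hrp α t1 h11 h12, bwdFun_val₃ hrp α t2 h21 h22] at h'
      omega
    · rw [bwdFun_val₃ hrp α t1 h11 h12, bwdFun_val₂ hrp α t2 h21 h22] at h'
      omega
    · rw [bwdFun_val₃ hrp α t1 h11 h12, bwdFun_val₃ hrp α t2 h21 h22] at h'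
      have : (α ⟨(t1 : ℕ) - r, by have := t1.2; omega⟩) =
          (α ⟨(t2 : ℕ) - r, by have := t2.2; omega⟩) := Fin.ext (by omega)
      have := congrArg Fin.val (α.injective this)
      simp at this
      omega

/-- The backward permutation. -/
noncomputable def bwdPerm (hrp : r ≤ p) (α : Equiv.Perm (Fin (k + p - r))) : Equiv.Perm (Fin (k + p)) :=
  Equiv.ofBijective (bwdFun hrp α) (Finite.injective_iff_bijective.mp
    (bwdFun_injective hrp α))

lemma bwdPerm_apply (hrp : r ≤ p) (α : Equiv.Perm (Fin (k + p - r))) (t : Fin (k + p)) :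
    bwdPerm hrp α t = bwdFun hrp α t := rfl

/-- The key structural facts about a `(k,p)`-shuffle `μ` with `r ≤ μ 0`. -/
lemma key_facts (hrp : r ≤ p) (μ : Equiv.Perm (Fin (k + p))) (hμ : IsShuffle k μ)
    (h0 : k = 0 ∨ r ≤ permNat μ 0) :
    (∀ t : Fin (k + p), ((t : ℕ) < k ∨ k + r ≤ (t : ℕ)) → r ≤ (μ t : ℕ)) ∧
    (∀ t : Fin (k + p), k ≤ (t : ℕ) → (t : ℕ) < k + r → (μ t : ℕ) = (t : ℕ) - k) := by
  -- lower bound on the second block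
  have hlow : ∀ j, ∀ t : Fin (k + p), (t : ℕ) = k + j → j ≤ (μ t : ℕ) := by
    intro j
    induction j with
    | zero => intro t _; omega
    | succ j ih =>
      intro t ht
      have ht2 := t.2
      have h1 := ih ⟨k + j, by omega⟩ rfl
      have h2 := hμ.2 ⟨k + j, by omega⟩ t (by simp) (by simp; omega)
      rw [Fin.lt_def] at h2
      omega
  -- first block values are ≥ r
  have hfirst : ∀ t : Fin (k + p), (t : ℕ) < k → r ≤ (μ t : ℕ) := by
    intro t ht
    have hk : k ≠ 0 := by omega
    rcases h0 with h0 | h0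
    · exact absurd h0 hk
    · have hn : 0 < k + p := by omega
      rw [permNat, dif_pos hn] at h0
      rcases Nat.eq_zero_or_pos (t : ℕ) with h | h
      · have : (⟨0, hn⟩ : Fin (k + p)) = t := Fin.ext (by show 0 = (t : ℕ); omega)
        rwa [this] at h0
      · have := hμ.1 ⟨0, hn⟩ t (by simpa using h) ht
        rw [Fin.lt_def] at this
        omega
  -- preimages of small values lie in the second block
  have hinv : ∀ i, ∀ hi : i < r, k ≤ ((μ.symm ⟨i, by omega⟩ : Fin (k + p)) : ℕ) := by
    intro i hi
    by_contra hcon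
    have h1 := hfirst (μ.symm ⟨i, by omega⟩) (by omega)
    rw [Equiv.apply_symm_apply] at h1
    simp at h1
    omega
  -- preimages of small values are increasing
  have hinvmono : ∀ i j, ∀ hi : i < r, ∀ hj : j < r, i < j →
      ((μ.symm ⟨i, by omega⟩ : Fin (k + p)) : ℕ) <
        ((μ.symm ⟨j, by omega⟩ : Fin (k + p)) : ℕ) := by
    intro i j hi hj hij
    by_contra hcon
    rcases eq_or_lt_of_le (Nat.le_of_not_lt hcon) with h | h
    · have := μ.symm.injective (Fin.ext h : μ.symm ⟨j, by omega⟩ = μ.symm ⟨i, by omega⟩)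
      simp only [Fin.mk.injEq] at this
      omega
    · have h2 := hinv j hj
      have := hμ.2 (μ.symm ⟨j, by omega⟩) (μ.symm ⟨i, by omega⟩) h2 h
      rw [Fin.lt_def, Equiv.apply_symm_apply, Equiv.apply_symm_apply] at this
      simp at this
      omega
  -- preimages of small values are at least `k + i`
  have hsge : ∀ i, ∀ hi : i < r, k + i ≤ ((μ.symm ⟨i, by omega⟩ : Fin (k + p)) : ℕ) := by
    intro i
    induction i with
    | zero => intro hi; simpa using hinv 0 hi
    | succ i ih =>
      intro hi
      have h1 := ih (by omega)
      have h2 := hinvmono i (i + 1) (by omega) hi (by omega)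
      omega
  -- second block initial segment is the identity shifted by k
  have hsecond : ∀ i, ∀ hi : i < r, (μ ⟨k + i, by omega⟩ : ℕ) = i := by
    intro i hi
    have hlb : i ≤ (μ ⟨k + i, by omega⟩ : ℕ) := hlow i ⟨k + i, by omega⟩ rfl
    have hs := hsge i hi
    rcases eq_or_lt_of_le hs with h | h
    · have he : (⟨k + i, by omega⟩ : Fin (k + p)) = μ.symm ⟨i, by omega⟩ := Fin.ext h
      rw [he, Equiv.apply_symm_apply]
    · have h2 := hμ.2 ⟨k + i, by omega⟩ (μ.symm ⟨i, by omega⟩) (by simp) (by simpa using h)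
      rw [Fin.lt_def, Equiv.apply_symm_apply] at h2
      simp at h2
      omega
  constructor
  · intro t ht
    rcases ht with ht | ht
    · exact hfirst t ht
    · rcases Nat.eq_zero_or_pos r with hr | hr
      · omega
      · have h1 := hsecond (r - 1) (by omega)
        have h2 := hμ.2 ⟨k + (r - 1), by omega⟩ t (by simp) (by simp; omega)
        rw [Fin.lt_def] at h2
        omega
  · intro t ht1 ht2
    have h1 := hsecond ((t : ℕ) - k) (by omega)
    have : (⟨k + ((t : ℕ) - k), by omega⟩ : Fin (k + p)) = t :=
      Fin.ext (by show k + ((t : ℕ) - k) = (t : ℕ); omega)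
    rw [this] at h1
    omega

lemma fwdPerm_isShuffle (hrp : r ≤ p) (μ : Equiv.Perm (Fin (k + p))) (hμ : IsShuffle k μ)
    (hge : ∀ t : Fin (k + p), ((t : ℕ) < k ∨ k + r ≤ (t : ℕ)) → r ≤ (μ t : ℕ)) :
    IsShuffle k (fwdPerm hrp μ hge) := by
  constructor
  · intro c d hcd hdk
    have hck : (c : ℕ) < k := lt_trans hcd hdk
    rw [Fin.lt_def, fwdPerm_apply, fwdPerm_apply, fwdFun_val, fwdFun_val]
    have hc : liftF hrp c = ⟨(c : ℕ), by omega⟩ := by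
      apply Fin.ext; rw [liftF_val, if_pos hck]
    have hd : liftF hrp d = ⟨(d : ℕ), by omega⟩ := by
      apply Fin.ext; rw [liftF_val, if_pos hdk]
    rw [hc, hd]
    have h1 := hμ.1 ⟨(c : ℕ), by omega⟩ ⟨(d : ℕ), by omega⟩ (by simpa using hcd)
      (by simpa using hdk)
    rw [Fin.lt_def] at h1
    have h2 := hge ⟨(c : ℕ), by omega⟩ (Or.inl hck)
    have h3 := hge ⟨(d : ℕ), by omega⟩ (Or.inl hdk)
    omega
  · intro c d hkc hcd
    have hc2 := c.2
    have hd2 := d.2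
    rw [Fin.lt_def, fwdPerm_apply, fwdPerm_apply, fwdFun_val, fwdFun_val]
    have hc : liftF hrp c = ⟨(c : ℕ) + r, by omega⟩ := by
      apply Fin.ext; rw [liftF_val, if_neg (by omega)]
    have hd : liftF hrp d = ⟨(d : ℕ) + r, by omega⟩ := by
      apply Fin.ext; rw [liftF_val, if_neg (by omega)]
    rw [hc, hd]
    have h1 := hμ.2 ⟨(c : ℕ) + r, by omega⟩ ⟨(d : ℕ) + r, by omega⟩ (by simp; omega)
      (by simp; omega)
    rw [Fin.lt_def] at h1
    have h2 := hge ⟨(c : ℕ) + r, by omega⟩ (Or.inr (by simp; omega))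
    have h3 := hge ⟨(d : ℕ) + r, by omega⟩ (Or.inr (by simp; omega))
    omega

lemma bwdPerm_isShuffle (hrp : r ≤ p) (α : Equiv.Perm (Fin (k + p - r)))
    (hα : IsShuffle k α) : IsShuffle k (bwdPerm hrp α) := by
  constructor
  · intro c d hcd hdk
    have hck : (c : ℕ) < k := lt_trans hcd hdk
    rw [Fin.lt_def, bwdPerm_apply, bwdPerm_apply, bwdFun_val₁ hrp α c hck,
      bwdFun_val₁ hrp α d hdk]
    have h1 := hα.1 ⟨(c : ℕ), by omega⟩ ⟨(d : ℕ), by omega⟩ (by simpa using hcd)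
      (by simpa using hdk)
    rw [Fin.lt_def] at h1
    omega
  · intro c d hkc hcd
    have hc2 := c.2
    have hd2 := d.2
    rw [Fin.lt_def, bwdPerm_apply, bwdPerm_apply]
    by_cases hc : (c : ℕ) < k + r <;> by_cases hd : (d : ℕ) < k + r
    · rw [bwdFun_val₂ hrp α c (by omega) hc, bwdFun_val₂ hrp α d (by omega) hd]
      omega
    · rw [bwdFun_val₂ hrp α c (by omega) hc, bwdFun_val₃ hrp α d (by omega) hd]
      omega
    · omega
    · rw [bwdFun_val₃ hrp α c (by omega) hc, bwdFun_val₃ hrp α d (by omega) hd]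
      have h1 := hα.2 ⟨(c : ℕ) - r, by omega⟩ ⟨(d : ℕ) - r, by omega⟩ (by simp; omega)
        (by simp; omega)
      rw [Fin.lt_def] at h1
      omega

lemma bwdPerm_cond (hrp : r ≤ p) (α : Equiv.Perm (Fin (k + p - r))) :
    k = 0 ∨ r ≤ permNat (bwdPerm hrp α) 0 := by
  rcases Nat.eq_zero_or_pos k with hk | hk
  · exact Or.inl hk
  · right
    have hn : 0 < k + p := by omega
    rw [permNat, dif_pos hn]
    rw [bwdPerm_apply, bwdFun_val₁ hrp α ⟨0, hn⟩ (by simpa using hk)]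
    omega

lemma bwd_fwd (hrp : r ≤ p) (μ : Equiv.Perm (Fin (k + p))) (hμ : IsShuffle k μ)
    (h0 : k = 0 ∨ r ≤ permNat μ 0)
    (hge : ∀ t : Fin (k + p), ((t : ℕ) < k ∨ k + r ≤ (t : ℕ)) → r ≤ (μ t : ℕ)) :
    bwdPerm hrp (fwdPerm hrp μ hge) = μ := by
  have hpt := (key_facts hrp μ hμ h0).2
  apply Equiv.ext
  intro t
  apply Fin.ext
  have ht2 := t.2
  rw [bwdPerm_apply]
  by_cases h1 : (t : ℕ) < k
  · rw [bwdFun_val₁ hrp (fwdPerm hrp μ hge) t h1, fwdPerm_apply, fwdFun_val]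
    have hl : liftF hrp (⟨(t : ℕ), by omega⟩ : Fin (k + p - r)) = ⟨(t : ℕ), by omega⟩ := by
      apply Fin.ext; rw [liftF_val]; simp [h1]
    rw [hl]
    have h2 := hge ⟨(t : ℕ), by omega⟩ (Or.inl h1)
    have : (⟨(t : ℕ), by omega⟩ : Fin (k + p)) = t := Fin.ext rfl
    rw [this] at h2 ⊢
    omega
  · by_cases h2 : (t : ℕ) < k + r
    · rw [bwdFun_val₂ hrp (fwdPerm hrp μ hge) t h1 h2]
      exact (hpt t (by omega) h2).symm
    · rw [bwdFun_val₃ hrp (fwdPerm hrp μ hge) t h1 h2, fwdPerm_apply, fwdFun_val]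
      have hl : liftF hrp (⟨(t : ℕ) - r, by omega⟩ : Fin (k + p - r)) = ⟨(t : ℕ), by omega⟩ := by
        apply Fin.ext; rw [liftF_val]; simp only [Fin.val_mk]
        rw [if_neg (by omega)]; omega
      rw [hl]
      have h3 := hge ⟨(t : ℕ), by omega⟩ (Or.inr (by simp; omega))
      have : (⟨(t : ℕ), by omega⟩ : Fin (k + p)) = t := Fin.ext rfl
      rw [this] at h3 ⊢
      omega

lemma fwd_bwd (hrp : r ≤ p) (α : Equiv.Perm (Fin (k + p - r)))
    (hge : ∀ t : Fin (k + p), ((t : ℕ) < k ∨ k + r ≤ (t : ℕ)) →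
      r ≤ ((bwdPerm hrp α) t : ℕ)) :
    fwdPerm hrp (bwdPerm hrp α) hge = α := by
  apply Equiv.ext
  intro t
  apply Fin.ext
  have ht2 := t.2
  rw [fwdPerm_apply, fwdFun_val, bwdPerm_apply]
  by_cases h1 : (t : ℕ) < k
  · have hl : liftF hrp t = ⟨(t : ℕ), by omega⟩ := by
      apply Fin.ext; rw [liftF_val, if_pos h1]
    rw [hl, bwdFun_val₁ hrp α ⟨(t : ℕ), by omega⟩ (by simpa using h1)]
    have : (⟨(t : ℕ), by omega⟩ : Fin (k + p - r)) = t := Fin.ext rfl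
    rw [this]
    omega
  · have hl : liftF hrp t = ⟨(t : ℕ) + r, by omega⟩ := by
      apply Fin.ext; rw [liftF_val, if_neg h1]
    rw [hl, bwdFun_val₃ hrp α ⟨(t : ℕ) + r, by omega⟩ (by show ¬ (t : ℕ) + r < k; omega)
      (by show ¬ (t : ℕ) + r < k + r; omega)]
    have : (⟨(t : ℕ) + r - r, by omega⟩ : Fin (k + p - r)) = t :=
      Fin.ext (by show (t : ℕ) + r - r = (t : ℕ); omega)
    rw [this]
    omega

end ShuffleRestrictionAux

open ShuffleRestrictionAux in
/-- The map `μ ↦ α` with `α(t) = μ(t) - r` for `t < k` and `α(t) = μ(t+r) - r` for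
`k ≤ t < k+p-r` is a bijection from the `(k,p)`-shuffles `μ` with `r ≤ μ(0)` (vacuous if
`k = 0`) onto the `(k, p-r)`-shuffles; its inverse sends `α` to `μ` with `μ(t) = α(t)+r` for
`t < k`, `μ(t) = t-k` for `k ≤ t < k+r`, and `μ(t) = α(t-r)+r` for `k+r ≤ t < k+p`. -/
theorem shuffle_restriction_bijection (k p r : ℕ) (hrp : r ≤ p) :
    ∃ e : {μ : Equiv.Perm (Fin (k + p)) // IsShuffle k μ ∧ (k = 0 ∨ r ≤ permNat μ 0)} ≃
        {α : Equiv.Perm (Fin (k + p - r)) // IsShuffle k α},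
      (∀ μ, ∀ t < k + p - r,
        permNat (e μ).1 t =
          if t < k then permNat μ.1 t - r else permNat μ.1 (t + r) - r) ∧
      (∀ α, ∀ t < k + p,
        permNat (e.symm α).1 t =
          if t < k then permNat α.1 t + r
          else if t < k + r then t - k
          else permNat α.1 (t - r) + r) := by
  refine ⟨{
    toFun := fun μ => ⟨fwdPerm hrp μ.1 (key_facts hrp μ.1 μ.2.1 μ.2.2).1,
      fwdPerm_isShuffle hrp μ.1 μ.2.1 _⟩
    invFun := fun α => ⟨bwdPerm hrp α.1, bwdPerm_isShuffle hrp α.1 α.2, bwdPerm_cond hrp α.1⟩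
    left_inv := fun μ => Subtype.ext (bwd_fwd hrp μ.1 μ.2.1 μ.2.2 _)
    right_inv := fun α => Subtype.ext (fwd_bwd hrp α.1 _) }, ?_, ?_⟩
  · intro μ t ht
    have hge := (key_facts hrp μ.1 μ.2.1 μ.2.2).1
    rw [permNat, dif_pos ht]
    show ((fwdFun hrp μ.1 hge ⟨t, ht⟩ : Fin (k + p - r)) : ℕ) = _
    rw [fwdFun_val]
    by_cases h1 : t < k
    · rw [if_pos h1]
      have hl : liftF hrp ⟨t, ht⟩ = ⟨t, by omega⟩ := by
        apply Fin.ext; rw [liftF_val]; exact if_pos h1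
      rw [hl, permNat, dif_pos (show t < k + p by omega)]
    · rw [if_neg h1]
      have hl : liftF hrp ⟨t, ht⟩ = ⟨t + r, by omega⟩ := by
        apply Fin.ext; rw [liftF_val]; exact if_neg h1
      rw [hl, permNat, dif_pos (show t + r < k + p by omega)]
  · intro α t ht
    rw [permNat, dif_pos ht]
    show ((bwdFun hrp α.1 ⟨t, ht⟩ : Fin (k + p)) : ℕ) = _
    by_cases h1 : t < k
    · rw [bwdFun_val₁ hrp α.1 ⟨t, ht⟩ (by simpa using h1), if_pos h1, permNat,
        dif_pos (show t < k + p - r by omega)]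
    · rw [if_neg h1]
      by_cases h2 : t < k + r
      · rw [bwdFun_val₂ hrp α.1 ⟨t, ht⟩ (by simpa using h1) (by simpa using h2), if_pos h2]
      · rw [bwdFun_val₃ hrp α.1 ⟨t, ht⟩ (by simpa using h1) (by simpa using h2), if_neg h2,
          permNat, dif_pos (show t - r < k + p - r by omega)]
end

section
/- In the simplicial category Δ, for nonnegative integers k, p, r with r ≤ p and a (k,p)-shuffle μ with r ≤ μ(0), letting α be the corresponding (k, p-r)-shuffle (α(t) = μ(t)-r for t < k, α(t) = μ(t+r)-r for k ≤ t < k+p-r), the following identity of order-preserving maps [p+k-r] → [p] holds: s^{μ(0)} ∘ ... ∘ s^{μ(k-1)} ∘ d^{r-1} ∘ ... ∘ d^0 = d^{r-1} ∘ ... ∘ d^0 ∘ s^{α(0)} ∘ ... ∘ s^{α(k-1)}, where d^i : [n-1] → [n] are coface maps and s^i : [n+1] → [n] are codegeneracy maps. -/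
/-- The coface map `d^i : [n-1] → [n]` of the simplex category, as the order-preserving
injection of natural numbers skipping `i`. -/
def coface (i : ℕ) : ℕ → ℕ := fun x => if x < i then x else x + 1

/-- The codegeneracy map `s^i : [n+1] → [n]` of the simplex category, as the order-preserving
surjection of natural numbers repeating `i`. -/
def codegen (i : ℕ) : ℕ → ℕ := fun x => if x ≤ i then x else x - 1

/-- The composite `d^{l₀} ∘ d^{l₁} ∘ ⋯` of cofaces indexed by a list. -/
def cofaceList (l : List ℕ) : ℕ → ℕ := l.foldr (fun i g => coface i ∘ g) id

/-- The composite `s^{l₀} ∘ s^{l₁} ∘ ⋯` of codegeneracies indexed by a list. -/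
def codegenList (l : List ℕ) : ℕ → ℕ := l.foldr (fun i g => codegen i ∘ g) id


lemma cofaceList_range_reverse (r : ℕ) : ∀ x, cofaceList (List.range r).reverse x = x + r := by
  induction r with
  | zero => intro x; rfl
  | succ r ih =>
    intro x
    rw [List.range_succ, List.reverse_append]
    show coface r (cofaceList (List.range r).reverse x) = x + (r + 1)
    rw [ih]
    simp only [coface]
    rw [if_neg (by omega)]
    omega

lemma codegenList_shift (r : ℕ) : ∀ L : List ℕ, (∀ i ∈ L, r ≤ i) →
    ∀ x, codegenList L (x + r) = codegenList (L.map (· - r)) x + r := by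
  intro L
  induction L with
  | nil => intro _ x; rfl
  | cons a l ih =>
    intro h x
    have ha : r ≤ a := h a (by simp)
    have hl := ih (fun i hi => h i (List.mem_cons_of_mem _ hi)) x
    show codegen a (codegenList l (x + r)) = codegen (a - r) (codegenList (l.map (· - r)) x) + r
    rw [hl]
    simp only [codegen]
    split_ifs <;> omega

/-- For a `(k,p)`-shuffle `μ` with `r ≤ μ(0)` and corresponding `(k, p-r)`-shuffle `α`,
the identity `s^{μ(0)} ⋯ s^{μ(k-1)} d^{r-1} ⋯ d^0 = d^{r-1} ⋯ d^0 s^{α(0)} ⋯ s^{α(k-1)}`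
holds as order-preserving maps `[p+k-r] → [p]`. -/
theorem codegen_coface_interchange (k p r : ℕ) (hrp : r ≤ p)
    (μ : Equiv.Perm (Fin (k + p))) (hμ : IsShuffle k μ)
    (hr0 : k = 0 ∨ r ≤ permNat μ 0)
    (α : Equiv.Perm (Fin (k + p - r))) (hα : IsShuffle k α)
    (hform : ∀ t < k + p - r,
      permNat α t = if t < k then permNat μ t - r else permNat μ (t + r) - r) :
    ∀ x ≤ p + k - r,
      (codegenList ((List.range k).map (permNat μ)) ∘ cofaceList (List.range r).reverse) x =
      (cofaceList (List.range r).reverse ∘ codegenList ((List.range k).map (permNat α))) x := by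
  intro x hx
  simp only [Function.comp_apply]
  rw [cofaceList_range_reverse, cofaceList_range_reverse]
  have hk : ∀ i ∈ (List.range k).map (permNat μ), r ≤ i := by
    intro i hi
    simp only [List.mem_map, List.mem_range] at hi
    obtain ⟨t, ht, rfl⟩ := hi
    have hk0 : r ≤ permNat μ 0 := hr0.resolve_left (by omega)
    rcases Nat.eq_zero_or_pos t with h0 | h0
    · subst h0; exact hk0
    · have h1 : (0 : ℕ) < k + p := by omega
      have h2 : t < k + p := by omega
      have hlt := hμ.1 ⟨0, h1⟩ ⟨t, h2⟩ (by simpa) (by simpa using ht)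
      have hle : permNat μ 0 ≤ permNat μ t := by
        simp only [permNat, dif_pos h1, dif_pos h2]
        exact le_of_lt hlt
      omega
  rw [codegenList_shift r _ hk]
  have hlist : ((List.range k).map (permNat μ)).map (· - r) = (List.range k).map (permNat α) := by
    rw [List.map_map]
    apply List.map_congr_left
    intro t ht
    simp only [List.mem_range] at ht
    have h1 : t < k + p - r := by omega
    have h2 := hform t h1
    simp only [Function.comp_apply, h2, if_pos ht]
  rw [hlist]
end

section
/- In the simplicial category Δ, with μ a (k,p)-shuffle satisfying r ≤ μ(0) and α the corresponding (k, p-r)-shuffle, the identity s^{μ(k)} ∘ ... ∘ s^{μ(p+k-1)} ∘ d^{r-1} ∘ ... ∘ d^0 = s^{α(k)} ∘ ... ∘ s^{α(p+k-r-1)} holds as maps [p+k-r] → [k]. -/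
lemma codegenList_nil : codegenList [] = id := rfl

lemma codegenList_cons (a : ℕ) (l : List ℕ) :
    codegenList (a :: l) = codegen a ∘ codegenList l := rfl

lemma codegenList_append (l1 l2 : List ℕ) :
    codegenList (l1 ++ l2) = codegenList l1 ∘ codegenList l2 := by
  induction l1 with
  | nil => rfl
  | cons a l ih =>
    funext x
    simp [codegenList_cons, ih, Function.comp]

lemma codegenList_range (r : ℕ) : ∀ z, codegenList (List.range r) z = z - r := by
  induction r with
  | zero => intro z; rfl
  | succ n ih =>
    intro z
    rw [List.range_succ, codegenList_append]
    show codegenList (List.range n) (codegen n z) = z - (n+1)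
    rw [ih]
    simp only [codegen]
    split <;> omega

lemma codegen_shift (a r x : ℕ) (h : r ≤ a) : codegen a (x + r) = codegen (a - r) x + r := by
  simp only [codegen]
  split <;> split <;> omega

lemma codegenList_shift_s6 (r : ℕ) (l : List ℕ) (h : ∀ a ∈ l, r ≤ a) (x : ℕ) :
    codegenList l (x + r) = codegenList (l.map (· - r)) x + r := by
  induction l with
  | nil => rfl
  | cons a l ih =>
    simp only [List.map_cons, codegenList_cons, Function.comp_apply]
    rw [ih (fun b hb => h b (List.mem_cons_of_mem _ hb)),
      codegen_shift a r _ (h a List.mem_cons_self)]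

lemma perm_second_bound (k p : ℕ) (μ : Equiv.Perm (Fin (k+p))) (hμ : IsShuffle k μ) :
    ∀ t, (h : t < p) → t ≤ (μ ⟨k+t, by omega⟩ : ℕ) := by
  intro t
  induction t with
  | zero => intro h; exact Nat.zero_le _
  | succ n ih =>
    intro h
    have h1 : n < p := by omega
    have h2 := hμ.2 ⟨k+n, by omega⟩ ⟨k+n+1, by omega⟩ (by simp) (by simp)
    rw [Fin.lt_def] at h2
    have h3 := ih h1
    have : (⟨k + (n+1), by omega⟩ : Fin (k+p)) = ⟨k + n + 1, by omega⟩ := by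
      apply Fin.ext; simp; omega
    rw [this]
    omega

lemma mu_init (k p r : ℕ) (hrp : r ≤ p) (μ : Equiv.Perm (Fin (k+p))) (hμ : IsShuffle k μ)
    (hr0 : k = 0 ∨ r ≤ permNat μ 0) :
    ∀ j, (hj : j < r) → (μ ⟨k+j, by omega⟩ : ℕ) = j := by
  intro j
  induction j using Nat.strong_induction_on with
  | _ j ih =>
    intro hj
    have hjn : j < k + p := by omega
    set m := μ.symm ⟨j, hjn⟩ with hm
    have hmj : μ m = ⟨j, hjn⟩ := μ.apply_symm_apply _
    have hmk : k ≤ (m : ℕ) := by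
      rcases hr0 with h0 | h0
      · omega
      · by_contra hlt
        push_neg at hlt
        have h00 : (0:ℕ) < k + p := by omega
        have hr' : r ≤ (μ ⟨0, h00⟩ : ℕ) := by
          simpa [permNat, h00] using h0
        rcases Nat.eq_zero_or_pos (m : ℕ) with hm0 | hm0
        · have : m = ⟨0, h00⟩ := Fin.ext hm0
          rw [this] at hmj
          have : (μ ⟨0, h00⟩ : ℕ) = j := by rw [hmj]
          omega
        · have h4 := hμ.1 ⟨0, h00⟩ m hm0 hlt
          rw [Fin.lt_def, hmj] at h4
          simp at h4
          omega
    -- write m = k + i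
    set i := (m : ℕ) - k with hi
    have hik : (m : ℕ) = k + i := by omega
    have hip : i < p := by have := m.isLt; omega
    have hmfin : m = ⟨k + i, by omega⟩ := Fin.ext hik
    have hval : (μ ⟨k+i, by omega⟩ : ℕ) = j := by
      rw [← hmfin, hmj]
    have hbound := perm_second_bound k p μ hμ i hip
    have hij : i ≤ j := by omega
    rcases Nat.lt_or_ge i j with hlt | hge
    · have := ih i hlt (by omega)
      omega
    · have heq : (⟨k + j, by omega⟩ : Fin (k+p)) = ⟨k + i, by omega⟩ :=
        Fin.ext (by simp; omega)
      rw [heq, hval]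

/-- For a `(k,p)`-shuffle `μ` with `r ≤ μ(0)` and corresponding `(k, p-r)`-shuffle `α`,
the identity `s^{μ(k)} ⋯ s^{μ(p+k-1)} d^{r-1} ⋯ d^0 = s^{α(k)} ⋯ s^{α(p+k-r-1)}`
holds as maps `[p+k-r] → [k]`. -/
theorem codegen_coface_interchange_second (k p r : ℕ) (hrp : r ≤ p)
    (μ : Equiv.Perm (Fin (k + p))) (hμ : IsShuffle k μ)
    (hr0 : k = 0 ∨ r ≤ permNat μ 0)
    (α : Equiv.Perm (Fin (k + p - r))) (hα : IsShuffle k α)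
    (hform : ∀ t < k + p - r,
      permNat α t = if t < k then permNat μ t - r else permNat μ (t + r) - r) :
    ∀ x ≤ p + k - r,
      (codegenList ((List.range p).map (fun t => permNat μ (k + t))) ∘
        cofaceList (List.range r).reverse) x =
      codegenList ((List.range (p - r)).map (fun t => permNat α (k + t))) x := by

  intro x hx
  simp only [Function.comp_apply]
  rw [cofaceList_range_reverse]
  have hsplit : List.range p = List.range r ++ (List.range (p - r)).map (fun t => r + t) := by
    conv_lhs => rw [show p = r + (p - r) by omega]
    rw [List.range_add]
  rw [hsplit, List.map_append, codegenList_append, Function.comp_apply, List.map_map]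
  -- inner entries are ≥ r
  have hge : ∀ a ∈ (List.range (p - r)).map
      ((fun t => permNat μ (k + t)) ∘ (fun t => r + t)), r ≤ a := by
    intro a ha
    simp only [List.mem_map, List.mem_range, Function.comp_apply] at ha
    obtain ⟨t, ht, rfl⟩ := ha
    have h1 : r + t < p := by omega
    have h2 : k + (r + t) < k + p := by omega
    have := perm_second_bound k p μ hμ (r + t) h1
    simp only [permNat, h2, dif_pos]
    omega
  rw [codegenList_shift_s6 r _ hge]
  -- prefix is the identity list
  have hpre : (List.range r).map (fun t => permNat μ (k + t)) = List.range r := by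
    rw [show (List.range r) = (List.range r).map id from (List.map_id _).symm]
    rw [List.map_map]
    apply List.map_congr_left
    intro t ht
    simp only [List.mem_range, List.map_id] at ht
    have h2 : k + t < k + p := by omega
    simp only [Function.comp_apply, id_eq, permNat, h2, dif_pos]
    exact mu_init k p r hrp μ hμ hr0 t ht
  rw [hpre, codegenList_range, Nat.add_sub_cancel]
  -- lists coincide
  congr 1
  rw [List.map_map]
  apply List.map_congr_left
  intro t ht
  simp only [List.mem_range] at ht
  have h1 : k + t < k + p - r := by omega
  have hf := hform (k + t) h1
  rw [if_neg (by omega)] at hf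
  simp only [Function.comp_apply]
  rw [hf, show k + t + r = k + (r + t) by omega]
end

section
/- Let μ be a (k,p)-shuffle and r ≤ p. The composite map [r] → [p] given by s^{μ(0)} ∘ ... ∘ s^{μ(k-1)} ∘ d^{p+k} ∘ ... ∘ d^{r+1} (where the d's are cofaces [r] → [p+k] and the s's are codegeneracies composing to [p]) is injective if and only if r ≤ μ(0) (with the convention that the condition holds vacuously when k = 0). -/
lemma cofaceList_fix (l : List ℕ) (x : ℕ) (h : ∀ i ∈ l, x < i) :
    cofaceList l x = x := by
  induction l with
  | nil => rfl
  | cons a l ih =>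
    have h1 : cofaceList (a :: l) x = coface a (cofaceList l x) := rfl
    rw [h1, ih (fun i hi => h i (List.mem_cons_of_mem a hi))]
    simp [coface, h a List.mem_cons_self]

lemma codegenList_fix (l : List ℕ) (x : ℕ) (h : ∀ i ∈ l, x ≤ i) :
    codegenList l x = x := by
  induction l with
  | nil => rfl
  | cons a l ih =>
    have h1 : codegenList (a :: l) x = codegen a (codegenList l x) := rfl
    rw [h1, ih (fun i hi => h i (List.mem_cons_of_mem a hi))]
    simp [codegen, h a List.mem_cons_self]

lemma cofaceList_main_fix (k p r x : ℕ) (hx : x ≤ r) :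
    cofaceList ((List.range (p + k - r)).map (fun t => p + k - t)) x = x := by
  apply cofaceList_fix
  intro i hi
  simp only [List.mem_map, List.mem_range] at hi
  obtain ⟨t, ht, rfl⟩ := hi
  have : t + r < p + k := by omega
  omega

/-- The composite `s^{μ(0)} ∘ ⋯ ∘ s^{μ(k-1)} ∘ d^{p+k} ∘ ⋯ ∘ d^{r+1} : [r] → [p]` is
injective if and only if `r ≤ μ(0)` (vacuously true when `k = 0`). -/
theorem codegen_coface_injective_iff (k p r : ℕ) (hrp : r ≤ p)
    (μ : Equiv.Perm (Fin (k + p))) (hμ : IsShuffle k μ) :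
    Set.InjOn
      (codegenList ((List.range k).map (permNat μ)) ∘
        cofaceList ((List.range (p + k - r)).map (fun t => p + k - t)))
      {x : ℕ | x ≤ r} ↔ (k = 0 ∨ r ≤ permNat μ 0) := by
  constructor
  · -- injective → k = 0 ∨ r ≤ μ 0
    intro hinj
    by_contra hc
    push_neg at hc
    obtain ⟨hk, hmr⟩ := hc
    obtain ⟨j, rfl⟩ : ∃ j, k = j + 1 := ⟨k - 1, by omega⟩
    set m := permNat μ 0 with hm
    have hm1r : m + 1 ≤ r := hmr
    -- rewrite the list
    have hlist : (List.range (j + 1)).map (permNat μ) =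
        permNat μ 0 :: (List.range j).map (fun t => permNat μ (t + 1)) := by
      rw [List.range_succ_eq_map, List.map_cons, List.map_map]
      rfl
    have htail : ∀ x, x ≤ m + 1 →
        codegenList ((List.range j).map (fun t => permNat μ (t + 1))) x = x := by
      intro x hx
      apply codegenList_fix
      intro i hi
      simp only [List.mem_map, List.mem_range] at hi
      obtain ⟨t, ht, rfl⟩ := hi
      have h0 : (0 : ℕ) < j + 1 + p := by omega
      have ht1 : t + 1 < j + 1 + p := by omega
      have hlt : μ ⟨0, h0⟩ < μ ⟨t + 1, ht1⟩ := hμ.1 ⟨0, h0⟩ ⟨t + 1, ht1⟩ (by simp) (by simp; omega)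
      have : permNat μ 0 = (μ ⟨0, h0⟩ : ℕ) := by simp [permNat, h0]
      have h2 : permNat μ (t + 1) = (μ ⟨t + 1, ht1⟩ : ℕ) := by simp [permNat, ht1]
      rw [h2]
      omega
    have hgm : (codegenList ((List.range (j + 1)).map (permNat μ)) ∘
        cofaceList ((List.range (p + (j + 1) - r)).map (fun t => p + (j + 1) - t))) m = m := by
      simp only [Function.comp_apply]
      rw [cofaceList_main_fix (j + 1) p r m (by omega), hlist]
      have : codegenList (permNat μ 0 :: (List.range j).map (fun t => permNat μ (t + 1))) m =
          codegen (permNat μ 0) (codegenList ((List.range j).map (fun t => permNat μ (t + 1))) m) := rfl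
      rw [this, htail m (by omega)]
      simp [codegen, hm]
    have hgm1 : (codegenList ((List.range (j + 1)).map (permNat μ)) ∘
        cofaceList ((List.range (p + (j + 1) - r)).map (fun t => p + (j + 1) - t))) (m + 1) = m := by
      simp only [Function.comp_apply]
      rw [cofaceList_main_fix (j + 1) p r (m + 1) (by omega), hlist]
      have : codegenList (permNat μ 0 :: (List.range j).map (fun t => permNat μ (t + 1))) (m + 1) =
          codegen (permNat μ 0) (codegenList ((List.range j).map (fun t => permNat μ (t + 1))) (m + 1)) := rfl
      rw [this, htail (m + 1) le_rfl]
      simp [codegen, hm]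
    have := hinj (show m ∈ {x : ℕ | x ≤ r} by simp; omega)
      (show m + 1 ∈ {x : ℕ | x ≤ r} by simp; omega) (by rw [hgm, hgm1])
    omega
  · -- k = 0 ∨ r ≤ μ 0 → injective
    intro h x hx y hy hxy
    simp only [Set.mem_setOf_eq] at hx hy
    have key : ∀ z, z ≤ r →
        (codegenList ((List.range k).map (permNat μ)) ∘
          cofaceList ((List.range (p + k - r)).map (fun t => p + k - t))) z = z := by
      intro z hz
      simp only [Function.comp_apply]
      rw [cofaceList_main_fix k p r z hz]
      apply codegenList_fix
      intro i hi
      simp only [List.mem_map, List.mem_range] at hi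
      obtain ⟨t, ht, rfl⟩ := hi
      rcases h with h0 | hrm
      · omega
      · have htk : t < k + p := by omega
        have h2 : permNat μ t = (μ ⟨t, htk⟩ : ℕ) := by simp [permNat, htk]
        rcases Nat.eq_zero_or_pos t with rfl | htpos
        · omega
        · have h0k : (0 : ℕ) < k + p := by omega
          have hlt : μ ⟨0, h0k⟩ < μ ⟨t, htk⟩ := hμ.1 ⟨0, h0k⟩ ⟨t, htk⟩ (by simpa) (by simpa)
          have h1 : permNat μ 0 = (μ ⟨0, h0k⟩ : ℕ) := by simp [permNat, h0k]
          rw [h2]; omega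
    rw [key x hx, key y hy] at hxy
    exact hxy
end

section
/- Explicitly, for a (k,p)-shuffle μ and r ≤ p, the map f = s^{μ(0)} ∘ ... ∘ s^{μ(k-1)} ∘ d^{p+k} ∘ ... ∘ d^{r+1} : [r] → [p] satisfies f(i) = i for i ≤ μ(0), f(i) = i - t for i ∈ (μ(t-1), μ(t)], and f(i) = i - k for i > μ(k-1). -/
lemma cofaceList_cons (a : ℕ) (l : List ℕ) :
    cofaceList (a :: l) = coface a ∘ cofaceList l := rfl

lemma cofaceList_fixed (i : ℕ) : ∀ (l : List ℕ), (∀ j ∈ l, i < j) → cofaceList l i = i := by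
  intro l
  induction l with
  | nil => intro _; rfl
  | cons a l ih =>
    intro h
    rw [cofaceList_cons, Function.comp_apply, ih (fun j hj => h j (List.mem_cons_of_mem _ hj))]
    have ha : i < a := h a List.mem_cons_self
    simp [coface, ha]

section

variable {k p : ℕ} (μ : Equiv.Perm (Fin (k + p)))

lemma permNat_mono (hμ : IsShuffle k μ) :
    ∀ c d : ℕ, c < d → d < k → permNat μ c < permNat μ d := by
  intro c d hcd hdk
  have hc : c < k + p := by omega
  have hd : d < k + p := by omega
  unfold permNat
  rw [dif_pos hc, dif_pos hd]
  exact hμ.1 ⟨c, hc⟩ ⟨d, hd⟩ hcd hdk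

lemma permNat_mono_add (hμ : IsShuffle k μ) :
    ∀ d a : ℕ, a + d < k → permNat μ a + d ≤ permNat μ (a + d) := by
  intro d
  induction d with
  | zero => intro a _; simp
  | succ d ih =>
    intro a h
    have h1 : permNat μ a + d ≤ permNat μ (a + d) := ih a (by omega)
    have h2 : permNat μ (a + d) < permNat μ (a + d + 1) :=
      permNat_mono μ hμ _ _ (by omega) (by omega)
    have he : permNat μ (a + (d + 1)) = permNat μ (a + d + 1) := rfl
    omega

lemma codegen_aux_A (hμ : IsShuffle k μ) :
    ∀ m j i, j + m = k → (j < k → i ≤ permNat μ j) →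
      codegenList ((List.range' j m).map (permNat μ)) i = i := by
  intro m
  induction m with
  | zero => intro j i _ _; rfl
  | succ m ih =>
    intro j i hjm hi
    have hjk : j < k := by omega
    have hij : i ≤ permNat μ j := hi hjk
    rw [List.range'_succ, List.map_cons, codegenList_cons, Function.comp_apply,
      ih (j + 1) i (by omega) (fun h => le_of_lt (lt_of_le_of_lt hij
        (permNat_mono μ hμ j (j + 1) (by omega) h)))]
    simp [codegen, hij]

lemma codegen_aux_B (hμ : IsShuffle k μ) :
    ∀ m j t i, j + m = k → j ≤ t → t ≤ k → (t < k → i ≤ permNat μ t) →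
      (j < t → permNat μ (t - 1) < i) →
      codegenList ((List.range' j m).map (permNat μ)) i = i - (t - j) := by
  intro m
  induction m with
  | zero =>
    intro j t i hjm hjt htk _ _
    have : t = j := by omega
    subst this
    simp [codegenList]
  | succ m ih =>
    intro j t i hjm hjt htk hit hlt
    have hjk : j < k := by omega
    rw [List.range'_succ, List.map_cons, codegenList_cons, Function.comp_apply]
    rcases eq_or_lt_of_le hjt with h | h
    · -- t = j
      subst h
      have hij : i ≤ permNat μ j := hit hjk
      rw [codegen_aux_A μ hμ m (j + 1) i (by omega) (fun h => le_of_lt (lt_of_le_of_lt hij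
        (permNat_mono μ hμ j (j + 1) (by omega) h)))]
      simp [codegen, hij]
    · -- j < t
      rw [ih (j + 1) t i (by omega) (by omega) htk hit (fun _ => hlt h)]
      have hmono : permNat μ j + (t - 1 - j) ≤ permNat μ (t - 1) := by
        have := permNat_mono_add μ hμ (t - 1 - j) j (by omega)
        have he : j + (t - 1 - j) = t - 1 := by omega
        rwa [he] at this
      have hi : permNat μ (t - 1) < i := hlt h
      have hx : permNat μ j < i - (t - (j + 1)) := by omega
      simp only [codegen, if_neg (not_le_of_gt hx)]
      omega

end

/-- The map `f = s^{μ(0)} ∘ ⋯ ∘ s^{μ(k-1)} ∘ d^{p+k} ∘ ⋯ ∘ d^{r+1} : [r] → [p]` satisfies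
`f(i) = i` for `i ≤ μ(0)`, `f(i) = i - t` for `μ(t-1) < i ≤ μ(t)`, and `f(i) = i - k`
for `i > μ(k-1)`. -/
theorem codegen_coface_formula (k p r : ℕ) (hrp : r ≤ p)
    (μ : Equiv.Perm (Fin (k + p))) (hμ : IsShuffle k μ) :
    letI f : ℕ → ℕ :=
      codegenList ((List.range k).map (permNat μ)) ∘
        cofaceList ((List.range (p + k - r)).map (fun t => p + k - t))
    (∀ i ≤ r, (k = 0 ∨ i ≤ permNat μ 0) → f i = i) ∧
    (∀ t, 1 ≤ t → t < k → ∀ i ≤ r, permNat μ (t - 1) < i → i ≤ permNat μ t → f i = i - t) ∧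
    (∀ i ≤ r, 0 < k → permNat μ (k - 1) < i → f i = i - k) := by
  have hcof : ∀ i ≤ r, cofaceList ((List.range (p + k - r)).map (fun t => p + k - t)) i = i := by
    intro i hi
    apply cofaceList_fixed
    intro j hj
    simp only [List.mem_map, List.mem_range] at hj
    obtain ⟨t, ht, rfl⟩ := hj
    omega
  refine ⟨?_, ?_, ?_⟩
  · intro i hi hk
    simp only [Function.comp_apply, hcof i hi]
    rw [List.range_eq_range']
    rcases hk with hk | hk
    · subst hk; rfl
    · exact codegen_aux_A μ hμ k 0 i (by omega) (fun _ => hk)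
  · intro t ht1 htk i hi h1 h2
    simp only [Function.comp_apply, hcof i hi]
    rw [List.range_eq_range']
    have := codegen_aux_B μ hμ k 0 t i (by omega) (by omega) (by omega)
      (fun _ => h2) (fun _ => h1)
    simpa using this
  · intro i hi hk h1
    simp only [Function.comp_apply, hcof i hi]
    rw [List.range_eq_range']
    have := codegen_aux_B μ hμ k 0 k i (by omega) (by omega) (by omega)
      (fun h => absurd h (lt_irrefl k)) (fun _ => h1)
    simpa using this
end

section
/- Let C be a chain complex over K = Z/2 with differential ∂. For each integer m, define the (non-additive) function q^m : C → W ⊗_{K[π]} (C ⊗ C) by q^m(c) = e_{m-|c|} ⊗ c ⊗ c + e_{m-|c|+1} ⊗ c ⊗ ∂c for homogeneous c of degree |c| (with e_j interpreted as 0 for j < 0, and π acting on C ⊗ C by swapping factors). Then q^m commutes with the differentials: ∂(q^m(c)) = q^m(∂c) for all homogeneous c. Consequently q^m sends cycles to cycles and induces a well-defined function on homology. -/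
/-- **The external operation `q^m` is a chain map.**
Here `C` is a (ℤ-graded) chain complex over `K = ℤ/2`, presented as a module `M` with
differential `bd` (`bd² = 0`) and grading `Cdeg`, and `T` is the complex
`W ⊗_{K[π]} (C ⊗ C)` presented as a module with differential `D` together with the
structure maps `el i x y = e_i ⊗ x ⊗ y` (bilinear, vanishing for `i < 0`), whose
differential satisfies the standard formula (in characteristic 2)
`D(e_i ⊗ x ⊗ y) = e_{i-1} ⊗ x ⊗ y + e_{i-1} ⊗ y ⊗ x + e_i ⊗ bdx ⊗ y + e_i ⊗ x ⊗ bdy`.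
Then for homogeneous `c` of degree `a`, the element
`q^m(c) = e_{m-a} ⊗ c ⊗ c + e_{m-a+1} ⊗ c ⊗ bdc` satisfies `D(q^m c) = q^m(bd c)`;
consequently `q^m` sends cycles to cycles. -/
theorem qm_chain_map {M T : Type*}
    [AddCommGroup M] [Module (ZMod 2) M] [AddCommGroup T] [Module (ZMod 2) T]
    (bd : M →ₗ[ZMod 2] M) (D : T →ₗ[ZMod 2] T)
    (hbdbd : ∀ x, bd (bd x) = 0)
    (el : ℤ → M →ₗ[ZMod 2] M →ₗ[ZMod 2] T)
    (helneg : ∀ i : ℤ, i < 0 → el i = 0)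
    (hDel : ∀ (i : ℤ) (x y : M),
      D (el i x y) = el (i - 1) x y + el (i - 1) y x + el i (bd x) y + el i x (bd y))
    (Cdeg : ℤ → Submodule (ZMod 2) M)
    (hbddeg : ∀ (a : ℤ) (x : M), x ∈ Cdeg a → bd x ∈ Cdeg (a - 1))
    (m a : ℤ) (c : M) (hc : c ∈ Cdeg a) :
    D (el (m - a) c c + el (m - a + 1) c (bd c)) =
      el (m - (a - 1)) (bd c) (bd c) + el (m - (a - 1) + 1) (bd c) (bd (bd c)) ∧
    (bd c = 0 → D (el (m - a) c c + el (m - a + 1) c (bd c)) = 0) := by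
  have char2 : ∀ t : T, t + t = 0 := by
    intro t
    have h : (2 : ZMod 2) • t = 0 := by
      rw [show (2 : ZMod 2) = 0 from rfl, zero_smul]
    rwa [two_smul] at h
  have hsmul : ∀ t : T, (2 : ℤ) • t = 0 := fun t => by rw [two_zsmul]; exact char2 t
  have key : D (el (m - a) c c + el (m - a + 1) c (bd c)) =
      el (m - (a - 1)) (bd c) (bd c) + el (m - (a - 1) + 1) (bd c) (bd (bd c)) := by
    rw [map_add, hDel, hDel, hbdbd]
    simp only [map_zero]
    have e1 : m - a + 1 - 1 = m - a := by ring
    have e2 : m - (a - 1) = m - a + 1 := by ring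
    rw [e1, e2]
    abel_nf
    simp only [hsmul, zero_add, add_zero]
  refine ⟨key, fun h => ?_⟩
  rw [key, h]
  simp
end

section
/- Let C be a chain complex over K = Z/2 and q^m as defined by q^m(c) = e_{m-|c|} ⊗ c ⊗ c + e_{m-|c|+1} ⊗ c ⊗ ∂c in W ⊗_π (C⊗C). Then q^m induces an additive map on homology: for homology classes [x], [y] of the same degree, q^m([x] + [y]) = q^m([x]) + q^m([y]) in H(W ⊗_π (C⊗C)). -/
/-- **The external operation `q^m` is additive on homology.**
With `C` a chain complex over `K = ℤ/2` presented as `(M, bd, Cdeg)` and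
`T = W ⊗_{K[π]} (C ⊗ C)` presented as `(T, D, el)` as in the definition of `q^m`
(`el i x y = e_i ⊗ x ⊗ y`), for cycles `x, y` of the same degree `a` the classes satisfy
`q^m([x] + [y]) = q^m([x]) + q^m([y])` in `H(W ⊗_π (C ⊗ C))`: the difference of
chain-level values `q^m(x+y) - q^m(x) - q^m(y)` is a boundary. -/
theorem qm_additive_on_homology {M T : Type*}
    [AddCommGroup M] [Module (ZMod 2) M] [AddCommGroup T] [Module (ZMod 2) T]
    (bd : M →ₗ[ZMod 2] M) (D : T →ₗ[ZMod 2] T)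
    (hbdbd : ∀ x, bd (bd x) = 0)
    (el : ℤ → M →ₗ[ZMod 2] M →ₗ[ZMod 2] T)
    (helneg : ∀ i : ℤ, i < 0 → el i = 0)
    (hDel : ∀ (i : ℤ) (x y : M),
      D (el i x y) = el (i - 1) x y + el (i - 1) y x + el i (bd x) y + el i x (bd y))
    (Cdeg : ℤ → Submodule (ZMod 2) M)
    (hbddeg : ∀ (a : ℤ) (x : M), x ∈ Cdeg a → bd x ∈ Cdeg (a - 1))
    (m a : ℤ) (x y : M) (hx : x ∈ Cdeg a) (hy : y ∈ Cdeg a)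
    (hxc : bd x = 0) (hyc : bd y = 0) :
    ∃ b : T,
      el (m - a) (x + y) (x + y) + el (m - a + 1) (x + y) (bd (x + y)) =
        el (m - a) x x + el (m - a + 1) x (bd x) +
        (el (m - a) y y + el (m - a + 1) y (bd y)) + D b := by
  refine ⟨el (m - a + 1) x y, ?_⟩
  have h2 : ∀ t : T, t + t = 0 := fun t => by
    rw [← two_smul (ZMod 2), show (2 : ZMod 2) = 0 from rfl, zero_smul]
  rw [hDel, hxc, hyc]
  have hadd : bd (x + y) = 0 := by rw [map_add, hxc, hyc, add_zero]
  rw [hadd]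
  simp only [map_add, map_zero, LinearMap.add_apply, LinearMap.zero_apply,
    LinearMap.map_zero, add_zero, sub_add_cancel]
  abel_nf
end
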